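/- Let n ≥ 3, let f be a unit of ℤ[t^{±1}], and let ĥ : VT_n → GL_n(ℤ[t^{±1}]) be a group homomorphism such that ĥ(s_i) = R_i(f) for all 1 ≤ i ≤ n−1 and such that ĥ is 2-local, i.e. for each i, ĥ(ρ_i) agrees with the identity matrix except possibly in rows and columns i, i+1. Then there exists a unit g of ℤ[t^{±1}] such that for every 1 ≤ i ≤ n−1, ĥ(ρ_i) is the matrix agreeing with the identity except in rows and columns i, i+1, where it has the 2×2 block [[0, g],[g^{-1}, 0]]. -/

import Mathlib

noncomputable section
open Matrix

/-- The defining relations of the virtual twin group `VTₙ` on generators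
`s_0, …, s_{n-2}` (the `Sum.inl` generators, 0-indexed) and `ρ_0, …, ρ_{n-2}`
(the `Sum.inr` generators, 0-indexed). -/
def vtRels (n : ℕ) : Set (FreeGroup (Fin (n - 1) ⊕ Fin (n - 1))) :=
  {r | (∃ i : Fin (n - 1),
          r = FreeGroup.of (Sum.inl i) * FreeGroup.of (Sum.inl i)) ∨
       (∃ i j : Fin (n - 1), (i.val + 2 ≤ j.val ∨ j.val + 2 ≤ i.val) ∧
          r = FreeGroup.of (Sum.inl i) * FreeGroup.of (Sum.inl j) *
              (FreeGroup.of (Sum.inl i))⁻¹ * (FreeGroup.of (Sum.inl j))⁻¹) ∨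
       (∃ i j : Fin (n - 1), j.val = i.val + 1 ∧
          r = FreeGroup.of (Sum.inr i) * FreeGroup.of (Sum.inr j) * FreeGroup.of (Sum.inr i) *
              (FreeGroup.of (Sum.inr j) * FreeGroup.of (Sum.inr i) * FreeGroup.of (Sum.inr j))⁻¹) ∨
       (∃ i j : Fin (n - 1), (i.val + 2 ≤ j.val ∨ j.val + 2 ≤ i.val) ∧
          r = FreeGroup.of (Sum.inr i) * FreeGroup.of (Sum.inr j) *
              (FreeGroup.of (Sum.inr i))⁻¹ * (FreeGroup.of (Sum.inr j))⁻¹) ∨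
       (∃ i : Fin (n - 1),
          r = FreeGroup.of (Sum.inr i) * FreeGroup.of (Sum.inr i)) ∨
       (∃ i j : Fin (n - 1), (i.val + 2 ≤ j.val ∨ j.val + 2 ≤ i.val) ∧
          r = FreeGroup.of (Sum.inl i) * FreeGroup.of (Sum.inr j) *
              (FreeGroup.of (Sum.inl i))⁻¹ * (FreeGroup.of (Sum.inr j))⁻¹) ∨
       (∃ i j : Fin (n - 1), j.val = i.val + 1 ∧
          r = FreeGroup.of (Sum.inr i) * FreeGroup.of (Sum.inr j) * FreeGroup.of (Sum.inl i) *
              (FreeGroup.of (Sum.inl j) * FreeGroup.of (Sum.inr i) * FreeGroup.of (Sum.inr j))⁻¹)}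

/-- The `n × n` matrix over `ℤ[t^{±1}]` agreeing with the identity except in rows and
columns `i, i+1` (0-indexed), where it has the `2 × 2` block `[[0, u], [u⁻¹, 0]]`,
for a unit `u` of `ℤ[t^{±1}]`. -/
def Rmat (n i : ℕ) (u : (LaurentPolynomial ℤ)ˣ) : Matrix (Fin n) (Fin n) (LaurentPolynomial ℤ) :=
  Matrix.of fun j k =>
    if j.val = i ∧ k.val = i then 0
    else if j.val = i ∧ k.val = i + 1 then (u : LaurentPolynomial ℤ)
    else if j.val = i + 1 ∧ k.val = i then ((u⁻¹ : (LaurentPolynomial ℤ)ˣ) : LaurentPolynomial ℤ)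
    else if j.val = i + 1 ∧ k.val = i + 1 then 0
    else if j = k then 1 else 0

abbrev L := LaurentPolynomial ℤ

lemma sum_eq_pair {n : ℕ} (p q : Fin n) (hpq : p ≠ q) (g : Fin n → L)
    (hg : ∀ l, l ≠ p → l ≠ q → g l = 0) : ∑ l, g l = g p + g q := by
  rw [← Finset.sum_pair hpq]
  refine (Finset.sum_subset (Finset.subset_univ _) ?_).symm
  intro x _ hx
  simp only [Finset.mem_insert, Finset.mem_singleton, not_or] at hx
  exact hg x hx.1 hx.2

def IsLoc {n : ℕ} (i : ℕ) (M : Matrix (Fin n) (Fin n) L) : Prop :=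
  ∀ j k : Fin n, ((j.val ≠ i ∧ j.val ≠ i + 1) ∨ (k.val ≠ i ∧ k.val ≠ i + 1)) →
    M j k = (1 : Matrix (Fin n) (Fin n) L) j k

lemma mul_loc_row_in {n i : ℕ} (hi : i + 1 < n) {M : Matrix (Fin n) (Fin n) L}
    (hM : IsLoc i M) (X : Matrix (Fin n) (Fin n) L) {j : Fin n} (k : Fin n)
    (hj : j.val = i ∨ j.val = i + 1) :
    (M * X) j k = M j ⟨i, by omega⟩ * X ⟨i, by omega⟩ k
      + M j ⟨i + 1, hi⟩ * X ⟨i + 1, hi⟩ k := by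
  rw [Matrix.mul_apply]
  apply sum_eq_pair _ _ (by simp)
  intro l hl1 hl2
  have h1 : l.val ≠ i := fun h => hl1 (Fin.ext h)
  have h2 : l.val ≠ i + 1 := fun h => hl2 (Fin.ext h)
  have := hM j l (Or.inr ⟨h1, h2⟩)
  rw [this, Matrix.one_apply_ne (fun h => by subst h; omega), zero_mul]

lemma mul_loc_row_out {n i : ℕ} {M : Matrix (Fin n) (Fin n) L}
    (hM : IsLoc i M) (X : Matrix (Fin n) (Fin n) L) {j : Fin n} (k : Fin n)
    (hj : j.val ≠ i ∧ j.val ≠ i + 1) :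
    (M * X) j k = X j k := by
  rw [Matrix.mul_apply]
  have : ∀ l, M j l = (1 : Matrix (Fin n) (Fin n) L) j l := fun l => hM j l (Or.inl hj)
  calc ∑ l, M j l * X l k = ∑ l, (1 : Matrix (Fin n) (Fin n) L) j l * X l k := by
        simp_rw [this]
    _ = X j k := by rw [← Matrix.mul_apply, Matrix.one_mul]

lemma mul_loc_col_in {n i : ℕ} (hi : i + 1 < n) {M : Matrix (Fin n) (Fin n) L}
    (hM : IsLoc i M) (X : Matrix (Fin n) (Fin n) L) (j : Fin n) {k : Fin n}
    (hk : k.val = i ∨ k.val = i + 1) :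
    (X * M) j k = X j ⟨i, by omega⟩ * M ⟨i, by omega⟩ k
      + X j ⟨i + 1, hi⟩ * M ⟨i + 1, hi⟩ k := by
  rw [Matrix.mul_apply]
  apply sum_eq_pair _ _ (by simp)
  intro l hl1 hl2
  have h1 : l.val ≠ i := fun h => hl1 (Fin.ext h)
  have h2 : l.val ≠ i + 1 := fun h => hl2 (Fin.ext h)
  have := hM l k (Or.inl ⟨h1, h2⟩)
  rw [this, Matrix.one_apply_ne (fun h => by subst h; omega), mul_zero]

lemma mul_loc_col_out {n i : ℕ} {M : Matrix (Fin n) (Fin n) L}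
    (hM : IsLoc i M) (X : Matrix (Fin n) (Fin n) L) (j : Fin n) {k : Fin n}
    (hk : k.val ≠ i ∧ k.val ≠ i + 1) :
    (X * M) j k = X j k := by
  rw [Matrix.mul_apply]
  have : ∀ l, M l k = (1 : Matrix (Fin n) (Fin n) L) l k := fun l => hM l k (Or.inr hk)
  calc ∑ l, X j l * M l k = ∑ l, X j l * (1 : Matrix (Fin n) (Fin n) L) l k := by
        simp_rw [this]
    _ = X j k := by rw [← Matrix.mul_apply, Matrix.mul_one]

lemma Rmat_loc (n i : ℕ) (u : Lˣ) : IsLoc i (Rmat n i u) := by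
  intro j k hjk
  rw [Matrix.one_apply, Rmat, Matrix.of_apply]
  split_ifs with h1 h2 h3 h4 h5 <;> first | rfl | omega |
    (exfalso; rcases hjk with ⟨hj1, hj2⟩ | ⟨hk1, hk2⟩ <;> omega)

lemma Rmat_00 {n i : ℕ} (u : Lˣ) {j k : Fin n} (hj : j.val = i) (hk : k.val = i) :
    Rmat n i u j k = 0 := by
  rw [Rmat, Matrix.of_apply, if_pos ⟨hj, hk⟩]

lemma Rmat_01 {n i : ℕ} (u : Lˣ) {j k : Fin n} (hj : j.val = i) (hk : k.val = i + 1) :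
    Rmat n i u j k = (u : L) := by
  rw [Rmat, Matrix.of_apply, if_neg (by omega), if_pos ⟨hj, hk⟩]

lemma Rmat_10 {n i : ℕ} (u : Lˣ) {j k : Fin n} (hj : j.val = i + 1) (hk : k.val = i) :
    Rmat n i u j k = ((u⁻¹ : Lˣ) : L) := by
  rw [Rmat, Matrix.of_apply, if_neg (by omega), if_neg (by omega), if_pos ⟨hj, hk⟩]

lemma Rmat_11 {n i : ℕ} (u : Lˣ) {j k : Fin n} (hj : j.val = i + 1) (hk : k.val = i + 1) :
    Rmat n i u j k = 0 := by
  rw [Rmat, Matrix.of_apply, if_neg (by omega), if_neg (by omega), if_neg (by omega),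
    if_pos ⟨hj, hk⟩]

lemma pair_lemma {n i : ℕ} (hi2 : i + 2 < n) (f : Lˣ)
    {M N : Matrix (Fin n) (Fin n) L}
    (hM : IsLoc i M) (hN : IsLoc (i + 1) N)
    (hM2 : M * M = 1) (hN2 : N * N = 1)
    (hrel : M * N * Rmat n i f = Rmat n (i + 1) f * (M * N)) :
    M ⟨i, by omega⟩ ⟨i, by omega⟩ = 0 ∧
    M ⟨i + 1, by omega⟩ ⟨i + 1, by omega⟩ = 0 ∧
    M ⟨i, by omega⟩ ⟨i + 1, by omega⟩ * M ⟨i + 1, by omega⟩ ⟨i, by omega⟩ = 1 ∧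
    N ⟨i + 1, by omega⟩ ⟨i + 1, by omega⟩ = 0 ∧
    N ⟨i + 2, by omega⟩ ⟨i + 2, by omega⟩ = 0 ∧
    N ⟨i + 1, by omega⟩ ⟨i + 2, by omega⟩ = M ⟨i, by omega⟩ ⟨i + 1, by omega⟩ ∧
    N ⟨i + 2, by omega⟩ ⟨i + 1, by omega⟩ = M ⟨i + 1, by omega⟩ ⟨i, by omega⟩ := by
  have : NoZeroDivisors L := by unfold L LaurentPolynomial; infer_instance
  have hi1 : i + 1 < n := by omega
  have hi1' : (i + 1) + 1 < n := by omega
  set e0 : Fin n := ⟨i, by omega⟩ with he0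
  set e1 : Fin n := ⟨i + 1, hi1⟩ with he1
  set e2 : Fin n := ⟨i + 2, hi2⟩ with he2
  have ne01 : e0 ≠ e1 := Fin.ne_of_val_ne (show i ≠ i + 1 by omega)
  have ne02 : e0 ≠ e2 := Fin.ne_of_val_ne (show i ≠ i + 2 by omega)
  have ne12 : e1 ≠ e2 := Fin.ne_of_val_ne (show i + 1 ≠ i + 2 by omega)
  -- off-block entries of N
  have hN00 : N e0 e0 = 1 := by
    rw [hN e0 e0 (Or.inl ⟨show i ≠ i + 1 by omega, show i ≠ i + 1 + 1 by omega⟩),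
      Matrix.one_apply_eq]
  have hN01 : N e0 e1 = 0 := by
    rw [hN e0 e1 (Or.inl ⟨show i ≠ i + 1 by omega, show i ≠ i + 1 + 1 by omega⟩),
      Matrix.one_apply_ne ne01]
  have hN02 : N e0 e2 = 0 := by
    rw [hN e0 e2 (Or.inl ⟨show i ≠ i + 1 by omega, show i ≠ i + 1 + 1 by omega⟩),
      Matrix.one_apply_ne ne02]
  have hN10 : N e1 e0 = 0 := by
    rw [hN e1 e0 (Or.inr ⟨show i ≠ i + 1 by omega, show i ≠ i + 1 + 1 by omega⟩),
      Matrix.one_apply_ne ne01.symm]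
  have hN20 : N e2 e0 = 0 := by
    rw [hN e2 e0 (Or.inr ⟨show i ≠ i + 1 by omega, show i ≠ i + 1 + 1 by omega⟩),
      Matrix.one_apply_ne ne02.symm]
  -- abbreviations for block entries
  set a := M e0 e0 with ha
  set b := M e0 e1 with hb
  set c := M e1 e0 with hc
  set d := M e1 e1 with hd
  set p := N e1 e1 with hp
  set q := N e1 e2 with hq
  set r := N e2 e1 with hr
  set s := N e2 e2 with hs
  -- involution equations
  have EA1 : a * a + b * c = 1 := by
    have E := congrFun (congrFun hM2 e0) e0
    rw [mul_loc_row_in hi1 hM M e0 (Or.inl rfl), Matrix.one_apply_eq] at E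
    exact E
  have EA2 : c * b + d * d = 1 := by
    have E := congrFun (congrFun hM2 e1) e1
    rw [mul_loc_row_in hi1 hM M e1 (Or.inr rfl), Matrix.one_apply_eq] at E
    exact E
  have EB1 : p * p + q * r = 1 := by
    have E := congrFun (congrFun hN2 e1) e1
    rw [mul_loc_row_in hi1' hN N e1 (Or.inl rfl), Matrix.one_apply_eq] at E
    exact E
  -- products M*N entries
  have P10 : (M * N) e1 e0 = c := by
    rw [mul_loc_row_in hi1 hM N e0 (Or.inr rfl), hN00, hN10]; ring
  have P11 : (M * N) e1 e1 = d * p := by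
    rw [mul_loc_row_in hi1 hM N e1 (Or.inr rfl), hN01]; ring
  have P12 : (M * N) e1 e2 = d * q := by
    rw [mul_loc_row_in hi1 hM N e2 (Or.inr rfl), hN02]; ring
  have P00 : (M * N) e0 e0 = a := by
    rw [mul_loc_row_in hi1 hM N e0 (Or.inl rfl), hN00, hN10]; ring
  have P01 : (M * N) e0 e1 = b * p := by
    rw [mul_loc_row_in hi1 hM N e1 (Or.inl rfl), hN01]; ring
  have P20 : (M * N) e2 e0 = 0 := by
    rw [mul_loc_row_out hM N e0 ⟨show i + 2 ≠ i by omega, show i + 2 ≠ i + 1 by omega⟩, hN20]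
  have P21 : (M * N) e2 e1 = r := by
    rw [mul_loc_row_out hM N e1 ⟨show i + 2 ≠ i by omega, show i + 2 ≠ i + 1 by omega⟩]
  have P22 : (M * N) e2 e2 = s := by
    rw [mul_loc_row_out hM N e2 ⟨show i + 2 ≠ i by omega, show i + 2 ≠ i + 1 by omega⟩]
  -- Rmat block entries
  have Si00 : Rmat n i f e0 e0 = 0 := Rmat_00 f rfl rfl
  have Si01 : Rmat n i f e0 e1 = (f : L) := Rmat_01 f rfl rfl
  have Si10 : Rmat n i f e1 e0 = ((f⁻¹ : Lˣ) : L) := Rmat_10 f rfl rfl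
  have Si11 : Rmat n i f e1 e1 = 0 := Rmat_11 f rfl rfl
  have Sj11 : Rmat n (i + 1) f e1 e1 = 0 := Rmat_00 f rfl rfl
  have Sj12 : Rmat n (i + 1) f e1 e2 = (f : L) := Rmat_01 f rfl rfl
  -- relation equations
  have R1 : d * p = 0 := by
    have E : (M * N) e1 e0 * Rmat n i f e0 e0 + (M * N) e1 e1 * Rmat n i f e1 e0
        = Rmat n (i + 1) f e1 e1 * (M * N) e1 e0 + Rmat n (i + 1) f e1 e2 * (M * N) e2 e0 := by
      have E0 := congrFun (congrFun hrel e1) e0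
      rw [mul_loc_col_in hi1 (Rmat_loc n i f) (M * N) e1 (Or.inl rfl),
        mul_loc_row_in hi1' (Rmat_loc n (i + 1) f) (M * N) e0 (Or.inl rfl)] at E0
      exact E0
    rw [Si00, Si10, Sj11, Sj12, P11, P20, P10] at E
    have E' : d * p * ((f⁻¹ : Lˣ) : L) * (f : L) = 0 := by
      rw [show c * 0 + d * p * ((f⁻¹ : Lˣ) : L) = d * p * ((f⁻¹ : Lˣ) : L) from by ring] at E
      rw [E]; ring
    rwa [mul_assoc, Units.inv_mul, mul_one] at E'
  have R2 : d * q = (f : L) * s := by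
    have E : (M * N) e1 e2
        = Rmat n (i + 1) f e1 e1 * (M * N) e1 e2 + Rmat n (i + 1) f e1 e2 * (M * N) e2 e2 := by
      have E0 := congrFun (congrFun hrel e1) e2
      rw [mul_loc_col_out (Rmat_loc n i f) (M * N) e1
          ⟨show i + 2 ≠ i by omega, show i + 2 ≠ i + 1 by omega⟩,
        mul_loc_row_in hi1' (Rmat_loc n (i + 1) f) (M * N) e2 (Or.inl rfl)] at E0
      exact E0
    rw [Sj11, Sj12, P12, P22] at E
    rw [E]; ring
  have R3 : c = r := by
    have E : (M * N) e1 e0 * Rmat n i f e0 e1 + (M * N) e1 e1 * Rmat n i f e1 e1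
        = Rmat n (i + 1) f e1 e1 * (M * N) e1 e1 + Rmat n (i + 1) f e1 e2 * (M * N) e2 e1 := by
      have E0 := congrFun (congrFun hrel e1) e1
      rw [mul_loc_col_in hi1 (Rmat_loc n i f) (M * N) e1 (Or.inr rfl),
        mul_loc_row_in hi1' (Rmat_loc n (i + 1) f) (M * N) e1 (Or.inl rfl)] at E0
      exact E0
    rw [Si01, Si11, Sj11, Sj12, P10, P11, P21] at E
    have E' : c * (f : L) = (f : L) * r := by
      rw [show c * (f : L) + d * p * 0 = c * (f : L) from by ring] at E
      rw [E]; ring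
    have E2 := congrArg (fun x => x * ((f⁻¹ : Lˣ) : L)) E'
    rwa [mul_assoc c, Units.mul_inv, mul_one, mul_comm ((f : L)) r,
      mul_assoc r, Units.mul_inv, mul_one] at E2
  have R4 : b * p = (f : L) * a := by
    have E : (M * N) e0 e0 * Rmat n i f e0 e0 + (M * N) e0 e1 * Rmat n i f e1 e0
        = (M * N) e0 e0 := by
      have E0 := congrFun (congrFun hrel e0) e0
      rw [mul_loc_col_in hi1 (Rmat_loc n i f) (M * N) e0 (Or.inl rfl),
        mul_loc_row_out (Rmat_loc n (i + 1) f) (M * N) e0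
          ⟨show i ≠ i + 1 by omega, show i ≠ i + 1 + 1 by omega⟩] at E0
      exact E0
    rw [Si00, Si10, P00, P01] at E
    have E' : b * p * ((f⁻¹ : Lˣ) : L) * (f : L) = a * (f : L) := by
      rw [show a * 0 + b * p * ((f⁻¹ : Lˣ) : L) = b * p * ((f⁻¹ : Lˣ) : L) from by ring] at E
      rw [E]
    rw [mul_assoc, Units.inv_mul, mul_one] at E'
    rw [E']; ring
  -- scalar algebra
  have had : a = 0 ∧ d = 0 ∧ b * c = 1 := by
    rcases mul_eq_zero.mp R1 with hd0 | hp0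
    · have hcb : c * b = 1 := by
        rw [hd0, mul_zero, add_zero] at EA2; exact EA2
      have ha2 : a * a = 0 := by linear_combination EA1 - hcb
      exact ⟨mul_self_eq_zero.mp ha2, hd0, by linear_combination hcb⟩
    · have ha0 : a = 0 := by
        have h0 : (f : L) * a = 0 := by rw [← R4, hp0, mul_zero]
        rcases mul_eq_zero.mp h0 with h | h
        · exact absurd h (Units.ne_zero f)
        · exact h
      have hbc : b * c = 1 := by linear_combination EA1 - a * ha0
      have hd2 : d * d = 0 := by linear_combination EA2 - hbc
      exact ⟨ha0, mul_self_eq_zero.mp hd2, hbc⟩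
  obtain ⟨ha0, hd0, hbc⟩ := had
  have hs0 : s = 0 := by
    have h0 : (f : L) * s = 0 := by rw [← R2, hd0, zero_mul]
    rcases mul_eq_zero.mp h0 with h | h
    · exact absurd h (Units.ne_zero f)
    · exact h
  have hp0 : p = 0 := by
    have h0 : b * p = 0 := by rw [R4, ha0, mul_zero]
    rcases mul_eq_zero.mp h0 with h | h
    · exfalso; rw [h, zero_mul] at hbc; exact zero_ne_one hbc
    · exact h
  have hqb : q = b := by
    have hqr : q * r = 1 := by linear_combination EB1 - p * hp0
    rw [← R3] at hqr
    linear_combination b * hqr - q * hbc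
  exact ⟨ha0, hd0, hbc, hp0, hs0, hqb, R3.symm⟩

lemma chain_lemma (n : ℕ) (hn : 3 ≤ n) (f : Lˣ)
    (Mi : Fin (n - 1) → Matrix (Fin n) (Fin n) L)
    (hMloc : ∀ i, IsLoc i.val (Mi i))
    (hMinv : ∀ i, Mi i * Mi i = 1)
    (hrelmat : ∀ i j : Fin (n - 1), j.val = i.val + 1 →
      Mi i * Mi j * Rmat n i.val f = Rmat n (i.val + 1) f * (Mi i * Mi j)) :
    ∃ g : Lˣ, ∀ i, Mi i = Rmat n i.val g := by
  have key : ∀ i j : Fin (n - 1), ∀ hij : j.val = i.val + 1,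
      Mi i ⟨i.val, by have := i.isLt; omega⟩ ⟨i.val, by have := i.isLt; omega⟩ = 0 ∧
      Mi i ⟨i.val + 1, by have := j.isLt; have := i.isLt; omega⟩ ⟨i.val + 1, by have := j.isLt; have := i.isLt; omega⟩ = 0 ∧
      Mi i ⟨i.val, by have := i.isLt; omega⟩ ⟨i.val + 1, by have := j.isLt; have := i.isLt; omega⟩ *
        Mi i ⟨i.val + 1, by have := j.isLt; have := i.isLt; omega⟩ ⟨i.val, by have := i.isLt; omega⟩ = 1 ∧
      Mi j ⟨i.val + 1, by have := j.isLt; have := i.isLt; omega⟩ ⟨i.val + 1, by have := j.isLt; have := i.isLt; omega⟩ = 0 ∧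
      Mi j ⟨i.val + 2, by have := j.isLt; have := i.isLt; omega⟩ ⟨i.val + 2, by have := j.isLt; have := i.isLt; omega⟩ = 0 ∧
      Mi j ⟨i.val + 1, by have := j.isLt; have := i.isLt; omega⟩ ⟨i.val + 2, by have := j.isLt; have := i.isLt; omega⟩ =
        Mi i ⟨i.val, by have := i.isLt; omega⟩ ⟨i.val + 1, by have := j.isLt; have := i.isLt; omega⟩ ∧
      Mi j ⟨i.val + 2, by have := j.isLt; have := i.isLt; omega⟩ ⟨i.val + 1, by have := j.isLt; have := i.isLt; omega⟩ =
        Mi i ⟨i.val + 1, by have := j.isLt; have := i.isLt; omega⟩ ⟨i.val, by have := i.isLt; omega⟩ := by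
    intro i j hij
    have hi2 : i.val + 2 < n := by have := j.isLt; have := i.isLt; omega
    exact pair_lemma hi2 f (hMloc i) (hij ▸ hMloc j) (hMinv i) (hMinv j)
      (hrelmat i j hij)
  have h0 : (0 : ℕ) < n - 1 := by omega
  have h1 : (1 : ℕ) < n - 1 := by omega
  have h0n : (0 : ℕ) < n := by omega
  have h1n : (1 : ℕ) < n := by omega
  have main : ∀ m : ℕ, ∀ hm : m < n - 1,
      Mi ⟨m, hm⟩ ⟨m, by omega⟩ ⟨m, by omega⟩ = 0 ∧
      Mi ⟨m, hm⟩ ⟨m + 1, by omega⟩ ⟨m + 1, by omega⟩ = 0 ∧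
      Mi ⟨m, hm⟩ ⟨m, by omega⟩ ⟨m + 1, by omega⟩ = Mi ⟨0, h0⟩ ⟨0, h0n⟩ ⟨1, h1n⟩ ∧
      Mi ⟨m, hm⟩ ⟨m + 1, by omega⟩ ⟨m, by omega⟩ = Mi ⟨0, h0⟩ ⟨1, h1n⟩ ⟨0, h0n⟩ := by
    intro m
    induction m with
    | zero =>
      intro hm
      obtain ⟨A0, D0, _, _, _, _, _⟩ := key ⟨0, hm⟩ ⟨1, h1⟩ rfl
      exact ⟨A0, D0, rfl, rfl⟩
    | succ m ih =>
      intro hm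
      have hm' : m < n - 1 := by omega
      obtain ⟨_, _, B, G⟩ := ih hm'
      obtain ⟨_, _, _, A1, D1, B1, G1⟩ := key ⟨m, hm'⟩ ⟨m + 1, hm⟩ rfl
      exact ⟨A1, D1, B1.trans B, G1.trans G⟩
  obtain ⟨_, _, hbc, _⟩ := key ⟨0, h0⟩ ⟨1, h1⟩ rfl
  have hcb : Mi ⟨0, h0⟩ ⟨1, h1n⟩ ⟨0, h0n⟩ * Mi ⟨0, h0⟩ ⟨0, h0n⟩ ⟨1, h1n⟩ = 1 := by
    rw [mul_comm]; exact hbc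
  refine ⟨⟨Mi ⟨0, h0⟩ ⟨0, h0n⟩ ⟨1, h1n⟩, Mi ⟨0, h0⟩ ⟨1, h1n⟩ ⟨0, h0n⟩, hbc, hcb⟩, ?_⟩
  set g : Lˣ := ⟨Mi ⟨0, h0⟩ ⟨0, h0n⟩ ⟨1, h1n⟩, Mi ⟨0, h0⟩ ⟨1, h1n⟩ ⟨0, h0n⟩, hbc, hcb⟩ with hgdef
  have hgval : (g : L) = Mi ⟨0, h0⟩ ⟨0, h0n⟩ ⟨1, h1n⟩ := rfl
  have hginv : ((g⁻¹ : Lˣ) : L) = Mi ⟨0, h0⟩ ⟨1, h1n⟩ ⟨0, h0n⟩ := rfl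
  intro i
  refine Matrix.ext fun j k => ?_
  obtain ⟨A0, D0, B0, G0⟩ := main i.val i.isLt
  by_cases hj : j.val = i.val ∨ j.val = i.val + 1
  · by_cases hk : k.val = i.val ∨ k.val = i.val + 1
    · have hv1 : i.val + 1 < n := by have := i.isLt; omega
      have hv0 : i.val < n := by omega
      rcases hj with hj | hj <;> rcases hk with hk | hk
      · rw [show j = (⟨i.val, hv0⟩ : Fin n) from Fin.ext hj,
          show k = (⟨i.val, hv0⟩ : Fin n) from Fin.ext hk]
        exact A0.trans (Rmat_00 (n:=n) (i:=i.val) g rfl rfl).symm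
      · rw [show j = (⟨i.val, hv0⟩ : Fin n) from Fin.ext hj,
          show k = (⟨i.val + 1, hv1⟩ : Fin n) from Fin.ext hk]
        exact (B0.trans hgval.symm).trans (Rmat_01 (n:=n) (i:=i.val) g rfl rfl).symm
      · rw [show j = (⟨i.val + 1, hv1⟩ : Fin n) from Fin.ext hj,
          show k = (⟨i.val, hv0⟩ : Fin n) from Fin.ext hk]
        exact (G0.trans hginv.symm).trans (Rmat_10 (n:=n) (i:=i.val) g rfl rfl).symm
      · rw [show j = (⟨i.val + 1, hv1⟩ : Fin n) from Fin.ext hj,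
          show k = (⟨i.val + 1, hv1⟩ : Fin n) from Fin.ext hk]
        exact D0.trans (Rmat_11 (n:=n) (i:=i.val) g rfl rfl).symm
    · push_neg at hk
      rw [hMloc i j k (Or.inr hk), Rmat_loc n i.val g j k (Or.inr hk)]
  · push_neg at hj
    rw [hMloc i j k (Or.inl hj), Rmat_loc n i.val g j k (Or.inl hj)]

/-- Let `n ≥ 3`, let `f` be a unit of `ℤ[t^{±1}]`, and let
`ĥ : VTₙ → GLₙ(ℤ[t^{±1}])` be a group homomorphism with `ĥ(sᵢ) = Rᵢ(f)` for all `i`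
which is 2-local, i.e. each `ĥ(ρᵢ)` agrees with the identity matrix except possibly in
rows and columns `i, i+1`. Then there is a unit `g` of `ℤ[t^{±1}]` such that
`ĥ(ρᵢ) = Rᵢ(g)` for every `i`. -/
theorem statement14 (n : ℕ) (hn : 3 ≤ n) (f : (LaurentPolynomial ℤ)ˣ)
    (h : PresentedGroup (vtRels n) →*
      Matrix.GeneralLinearGroup (Fin n) (LaurentPolynomial ℤ))
    (hs : ∀ i : Fin (n - 1),
      (h (PresentedGroup.of (Sum.inl i)) :
        Matrix (Fin n) (Fin n) (LaurentPolynomial ℤ)) = Rmat n i.val f)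
    (hloc : ∀ i : Fin (n - 1), ∀ j k : Fin n,
      ((j.val ≠ i.val ∧ j.val ≠ i.val + 1) ∨ (k.val ≠ i.val ∧ k.val ≠ i.val + 1)) →
      (h (PresentedGroup.of (Sum.inr i)) :
          Matrix (Fin n) (Fin n) (LaurentPolynomial ℤ)) j k =
        (1 : Matrix (Fin n) (Fin n) (LaurentPolynomial ℤ)) j k) :
    ∃ g : (LaurentPolynomial ℤ)ˣ, ∀ i : Fin (n - 1),
      (h (PresentedGroup.of (Sum.inr i)) :
        Matrix (Fin n) (Fin n) (LaurentPolynomial ℤ)) = Rmat n i.val g := by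
  classical
  set π : FreeGroup (Fin (n - 1) ⊕ Fin (n - 1)) →* PresentedGroup (vtRels n) :=
    QuotientGroup.mk' (Subgroup.normalClosure (vtRels n)) with hπdef
  have hpi : ∀ x : Fin (n - 1) ⊕ Fin (n - 1), π (FreeGroup.of x) = PresentedGroup.of x :=
    fun _ => rfl
  have hMinv : ∀ i : Fin (n - 1),
      (h (PresentedGroup.of (Sum.inr i)) : Matrix (Fin n) (Fin n) (LaurentPolynomial ℤ)) *
        (h (PresentedGroup.of (Sum.inr i)) : Matrix (Fin n) (Fin n) (LaurentPolynomial ℤ)) = 1 := by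
    intro i
    have hmem : (FreeGroup.of (Sum.inr i) * FreeGroup.of (Sum.inr i)) ∈ vtRels n := by
      unfold vtRels; rw [Set.mem_setOf_eq]
      exact Or.inr (Or.inr (Or.inr (Or.inr (Or.inl ⟨i, rfl⟩))))
    have h1 : π (FreeGroup.of (Sum.inr i) * FreeGroup.of (Sum.inr i)) = 1 :=
      (QuotientGroup.eq_one_iff _).mpr (Subgroup.subset_normalClosure hmem)
    rw [_root_.map_mul] at h1
    have h2 := congrArg h h1
    rw [_root_.map_mul, _root_.map_one] at h2
    have h3 := congrArg (fun u : Matrix.GeneralLinearGroup (Fin n) (LaurentPolynomial ℤ) =>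
      (u : Matrix (Fin n) (Fin n) (LaurentPolynomial ℤ))) h2
    simp only [Units.val_mul, hpi, Units.val_one] at h3
    exact h3
  have hrelmat : ∀ i j : Fin (n - 1), j.val = i.val + 1 →
      (h (PresentedGroup.of (Sum.inr i)) : Matrix (Fin n) (Fin n) (LaurentPolynomial ℤ)) *
        (h (PresentedGroup.of (Sum.inr j)) : Matrix (Fin n) (Fin n) (LaurentPolynomial ℤ)) *
        Rmat n i.val f =
      Rmat n (i.val + 1) f *
        ((h (PresentedGroup.of (Sum.inr i)) : Matrix (Fin n) (Fin n) (LaurentPolynomial ℤ)) *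
          (h (PresentedGroup.of (Sum.inr j)) : Matrix (Fin n) (Fin n) (LaurentPolynomial ℤ))) := by
    intro i j hij
    have h1 : π (FreeGroup.of (Sum.inr i) * FreeGroup.of (Sum.inr j) * FreeGroup.of (Sum.inl i) *
        (FreeGroup.of (Sum.inl j) * FreeGroup.of (Sum.inr i) * FreeGroup.of (Sum.inr j))⁻¹)
        = 1 := by
      apply (QuotientGroup.eq_one_iff _).mpr
      apply Subgroup.subset_normalClosure
      unfold vtRels; rw [Set.mem_setOf_eq]
      exact Or.inr (Or.inr (Or.inr (Or.inr (Or.inr (Or.inr ⟨i, j, hij, rfl⟩)))))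
    simp only [_root_.map_mul, _root_.map_inv] at h1
    rw [mul_inv_eq_one] at h1
    have h2 := congrArg h h1
    simp only [_root_.map_mul] at h2
    have h3 := congrArg (fun u : Matrix.GeneralLinearGroup (Fin n) (LaurentPolynomial ℤ) =>
      (u : Matrix (Fin n) (Fin n) (LaurentPolynomial ℤ))) h2
    simp only [Units.val_mul, hpi] at h3
    rw [hs i, hs j, hij] at h3
    rw [mul_assoc (Rmat n (i.val + 1) f)] at h3
    exact h3
  obtain ⟨g, hg⟩ := chain_lemma n hn f
    (fun i => (h (PresentedGroup.of (Sum.inr i)) : Matrix (Fin n) (Fin n) (LaurentPolynomial ℤ)))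
    (fun i => hloc i) hMinv hrelmat
  exact ⟨g, fun i => hg i⟩
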